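/- The linear map sending a↦e, b↦d, c↦c, d↦b, e↦a, f↦−g, g↦−f, h↦h is a Lie algebra automorphism of Γ. -/
import Mathlib


/-- The underlying 8-dimensional real vector space of Γ, with coordinates
`a,b,c,d,e,f,g,h` indexed by `0,…,7`. -/
def G3 : Type := Fin 8 → ℝ

noncomputable instance : AddCommGroup G3 := Pi.addCommGroup
noncomputable instance : Module ℝ G3 := Pi.module _ _ _

lemma G3.add_apply (x y : G3) (i : Fin 8) : (x + y) i = x i + y i := rfl
lemma G3.smul_apply (t : ℝ) (x : G3) (i : Fin 8) : (t • x) i = t * x i := rfl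
lemma G3.zero_apply (i : Fin 8) : (0 : G3) i = 0 := rfl

/-- The bracket determined by `[a,b]=[c,d]=f`, `[b,c]=[d,e]=g`, `[b,f]=[g,d]=h`. -/
def brkt (x y : G3) : G3 := fun i =>
  if i = 5 then x 0 * y 1 - x 1 * y 0 + x 2 * y 3 - x 3 * y 2
  else if i = 6 then x 1 * y 2 - x 2 * y 1 + x 3 * y 4 - x 4 * y 3
  else if i = 7 then x 1 * y 5 - x 5 * y 1 + x 6 * y 3 - x 3 * y 6
  else 0

instance : Bracket G3 G3 := ⟨brkt⟩

lemma G3.lie_def (x y : G3) : ⁅x, y⁆ = brkt x y := rfl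

noncomputable instance : LieRing G3 where
  add_lie x y z := by
    funext i; fin_cases i <;>
      simp [G3.lie_def, brkt, G3.add_apply] <;> ring
  lie_add x y z := by
    funext i; fin_cases i <;>
      simp [G3.lie_def, brkt, G3.add_apply] <;> ring
  lie_self x := by
    funext i; fin_cases i <;>
      simp [G3.lie_def, brkt, G3.zero_apply] <;> ring
  leibniz_lie x y z := by
    funext i; fin_cases i <;>
      simp [G3.lie_def, brkt, G3.add_apply] <;> ring

noncomputable instance : LieAlgebra ℝ G3 where
  lie_smul t x y := by
    funext i; fin_cases i <;>
      simp [G3.lie_def, brkt, G3.smul_apply] <;> ring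

/-- basis vector -/
def bv (j : Fin 8) : G3 := fun i => if i = j then 1 else 0

/-- The linear map `a↦e, b↦d, c↦c, d↦b, e↦a, f↦−g, g↦−f, h↦h`. -/
def swapMap (x : G3) : G3 := fun i =>
  if i = 0 then x 4
  else if i = 1 then x 3
  else if i = 2 then x 2
  else if i = 3 then x 1
  else if i = 4 then x 0
  else if i = 5 then -x 6
  else if i = 6 then -x 5
  else x 7

/-- The map `a↦e, b↦d, c↦c, d↦b, e↦a, f↦−g, g↦−f, h↦h` is a Lie algebra
automorphism of Γ: linear, bijective and bracket-preserving. -/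
lemma swapMap_invol (x : G3) : swapMap (swapMap x) = x := by
  funext i; fin_cases i <;> simp [swapMap]

theorem stmt_7 :
    Function.Bijective swapMap ∧
    (∀ x y : G3, swapMap (x + y) = swapMap x + swapMap y) ∧
    (∀ (r : ℝ) (x : G3), swapMap (r • x) = r • swapMap x) ∧
    (∀ x y : G3, swapMap ⁅x, y⁆ = ⁅swapMap x, swapMap y⁆) := by
  refine ⟨Function.Involutive.bijective swapMap_invol, fun x y => ?_, fun r x => ?_, fun x y => ?_⟩
  · funext i; fin_cases i <;> simp [swapMap, G3.add_apply] <;> ring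
  · funext i; fin_cases i <;> simp [swapMap, G3.smul_apply] <;> ring
  · funext i; fin_cases i <;>
      simp [swapMap, G3.lie_def, brkt] <;> ring
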